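/- Let B be a blocking set of PG(m,2) with respect to k-spaces such that B intersects every k-space in an odd number of points. If |B| ≤ 2^{m−k+2} − 2, then B is a minimal blocking set, i.e., no proper subset of B is a blocking set with respect to k-spaces. -/
import Mathlib


open Finset

/-- `Vec n` is the vector space `F_2^n`. -/
abbrev Vec (n : ℕ) := Fin n → ZMod 2

/-- The standard dot product on `F_2^n`. -/
def dotp {n : ℕ} (a b : Vec n) : ZMod 2 := ∑ i, a i * b i

/-- The difference (derivative) function `D_{F,a}(x) = F(x) + F(x+a)`. -/
def Dder {n : ℕ} (F : Vec n → Vec n) (a x : Vec n) : Vec n := F x + F (x + a)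

/-- The linear hyperplane `H_b = {x : ⟨b,x⟩ = 0}`. -/
def Hyp {n : ℕ} (b : Vec n) : Set (Vec n) := {x | dotp b x = 0}

/-- The affine hyperplane `H̄_b = {x : ⟨b,x⟩ = 1}`. -/
def HypBar {n : ℕ} (b : Vec n) : Set (Vec n) := {x | dotp b x = 1}

/-- `T_b = {a : image(D_{F,a}) = H_b} ∪ {0}`. -/
def Tset {n : ℕ} (F : Vec n → Vec n) (b : Vec n) : Set (Vec n) :=
  {a | Set.range (Dder F a) = Hyp b} ∪ {0}

/-- `T̄_b = {a : image(D_{F,a}) = H̄_b}`. -/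
def TsetBar {n : ℕ} (F : Vec n → Vec n) (b : Vec n) : Set (Vec n) :=
  {a | Set.range (Dder F a) = HypBar b}

/-- `V_b = T_b ∪ T̄_b`. -/
def Vset {n : ℕ} (F : Vec n → Vec n) (b : Vec n) : Set (Vec n) := Tset F b ∪ TsetBar F b

/-- `F` is quadratic: all second derivatives are constant (algebraic degree ≤ 2). -/
def IsQuadratic {n m : ℕ} (F : Vec n → Vec m) : Prop :=
  ∀ a₁ a₂ : Vec n, ∃ c : Vec m, ∀ x, F (x + a₁ + a₂) + F (x + a₁) + F (x + a₂) + F x = c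

/-- `F` is APN: every equation `F(x) + F(x+a) = b`, `a ≠ 0`, has at most 2 solutions. -/
def IsAPN {n : ℕ} (F : Vec n → Vec n) : Prop :=
  ∀ a : Vec n, a ≠ 0 → ∀ b : Vec n, Nat.card {x : Vec n // F x + F (x + a) = b} ≤ 2

/-- The Walsh transform `W_F(b,a) = Σ_x (-1)^{⟨b,F(x)⟩ + ⟨a,x⟩}`. -/
def Walsh {n m : ℕ} (F : Vec n → Vec m) (b : Vec m) (a : Vec n) : ℤ :=
  ∑ x : Vec n, (-1 : ℤ) ^ ((dotp b (F x) + dotp a x).val)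

/-- The component `F_b` is bent: `|W_F(b,a)| = 2^{n/2}` for all `a`. -/
def IsBent {n m : ℕ} (F : Vec n → Vec m) (b : Vec m) : Prop :=
  ∀ a : Vec n, (Walsh F b a) ^ 2 = 2 ^ n

/-- The set `N_F` of non-trivial non-bent components of `F`. -/
def NF {n m : ℕ} (F : Vec n → Vec m) : Set (Vec m) := {b | b ≠ 0 ∧ ¬ IsBent F b}

/-- A vector space partition of `F_q^n`: a collection of nonzero subspaces such that
every nonzero vector lies in exactly one member. -/
def IsVSP {K : Type} [Field K] {n : ℕ} (𝒱 : Finset (Submodule K (Fin n → K))) : Prop :=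
  (∀ S ∈ 𝒱, S ≠ ⊥) ∧
  ∀ x : Fin n → K, x ≠ 0 → ∃! S : Submodule K (Fin n → K), S ∈ 𝒱 ∧ x ∈ S

/-- A blocking set of `PG(m,2)` (identified with `F_2^{m+1} \ {0}`) with respect to
`k`-spaces (nonzero parts of `(k+1)`-dimensional subspaces). -/
def PGBlocking (m k : ℕ) (B : Set (Fin (m + 1) → ZMod 2)) : Prop :=
  0 ∉ B ∧ ∀ S : Submodule (ZMod 2) (Fin (m + 1) → ZMod 2),
    Module.finrank (ZMod 2) S = k + 1 → ∃ x ∈ B, x ∈ S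

/-- `F_b` has amplitude `2^{(n+k)/2}`. -/
def HasAmp {n m : ℕ} (F : Vec n → Vec m) (b : Vec m) (k : ℕ) : Prop :=
  (∀ a, (Walsh F b a) ^ 2 = 0 ∨ (Walsh F b a) ^ 2 = 2 ^ (n + k)) ∧
  ∃ a, (Walsh F b a) ^ 2 = 2 ^ (n + k)

private lemma mem_span_singleton_zmod2 {M : Type*} [AddCommGroup M] [Module (ZMod 2) M]
    {w z : M} : z ∈ Submodule.span (ZMod 2) {w} ↔ z = 0 ∨ z = w := by
  rw [Submodule.mem_span_singleton]
  constructor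
  · rintro ⟨c, rfl⟩
    have hc : c = 0 ∨ c = 1 := by revert c; decide
    rcases hc with rfl | rfl
    · left; simp
    · right; simp
  · rintro (rfl | rfl)
    · exact ⟨0, by simp⟩
    · exact ⟨1, by simp⟩

private lemma ext_lemma {m : ℕ} (S : Submodule (ZMod 2) (Fin (m + 1) → ZMod 2))
    (w : (Fin (m + 1) → ZMod 2) ⧸ S) (hw : w ≠ 0) :
    ∃ T : Submodule (ZMod 2) (Fin (m + 1) → ZMod 2), S ≤ T ∧
      Module.finrank (ZMod 2) T = Module.finrank (ZMod 2) S + 1 ∧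
      ∀ z, (z ∈ T ↔ S.mkQ z = 0 ∨ S.mkQ z = w) := by
  obtain ⟨y, hy⟩ := Submodule.mkQ_surjective S w
  have hyS : y ∉ S := by
    intro hyS
    apply hw
    rw [← hy]
    simpa [Submodule.Quotient.mk_eq_zero] using hyS
  have hy0 : y ≠ 0 := by rintro rfl; exact hyS (Submodule.zero_mem S)
  refine ⟨S ⊔ Submodule.span (ZMod 2) {y}, le_sup_left, ?_, ?_⟩
  · have hinf : S ⊓ Submodule.span (ZMod 2) {y} = ⊥ := by
      rw [eq_bot_iff]
      rintro u ⟨huS, huY⟩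
      rcases mem_span_singleton_zmod2.mp huY with rfl | rfl
      · exact Submodule.zero_mem ⊥
      · exact absurd huS hyS
    have := Submodule.finrank_sup_add_finrank_inf_eq S (Submodule.span (ZMod 2) {y})
    rw [hinf, finrank_bot, finrank_span_singleton hy0] at this
    omega
  · intro z
    constructor
    · intro hz
      rcases Submodule.mem_sup.mp hz with ⟨a, ha, b, hb, rfl⟩
      rcases mem_span_singleton_zmod2.mp hb with rfl | rfl
      · left; simpa [Submodule.Quotient.mk_eq_zero] using ha
      · right
        rw [map_add, hy]
        have : S.mkQ a = 0 := by simpa [Submodule.Quotient.mk_eq_zero] using ha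
        rw [this, zero_add]
    · rintro (hz | hz)
      · exact Submodule.mem_sup_left (by simpa [Submodule.Quotient.mk_eq_zero] using hz)
      · have hzy : z - y ∈ S := by
          rw [← hy] at hz
          exact (Submodule.Quotient.eq S).mp hz
        have : z = (z - y) + y := by ring
        rw [this]
        exact Submodule.add_mem _ (Submodule.mem_sup_left hzy)
          (Submodule.mem_sup_right (Submodule.mem_span_singleton_self y))

private lemma key_lemma {m k : ℕ} (hk : k ≤ m) (B : Set (Fin (m + 1) → ZMod 2))
    (h0 : 0 ∉ B)
    (hodd : ∀ S : Submodule (ZMod 2) (Fin (m + 1) → ZMod 2),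
      Module.finrank (ZMod 2) S = k + 1 →
        Odd (Nat.card {z : Fin (m + 1) → ZMod 2 // z ∈ B ∧ z ∈ S}))
    (hsize : B.ncard ≤ 2 ^ (m - k + 2) - 2) {x : Fin (m + 1) → ZMod 2} (hx : x ∈ B) :
    ∃ S : Submodule (ZMod 2) (Fin (m + 1) → ZMod 2),
      Module.finrank (ZMod 2) S = k + 1 ∧ ∀ z ∈ B, z ∈ S → z = x := by
  classical
  have hx0 : x ≠ 0 := fun h => h0 (h ▸ hx)
  have hBfin : B.Finite := Set.toFinite B
  set D : Finset (Fin (m+1) → ZMod 2) := hBfin.toFinset.erase x with hDdef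
  have hDcard : D.card + 1 = B.ncard := by
    rw [hDdef, Finset.card_erase_of_mem (by simpa using hx),
      Set.ncard_eq_toFinset_card B hBfin]
    have : 0 < hBfin.toFinset.card := Finset.card_pos.mpr ⟨x, by simpa using hx⟩
    omega
  have hpow : (2:ℕ) ^ (m - k + 1) ≥ 2 := by
    calc (2:ℕ)^(m-k+1) ≥ 2^1 := Nat.pow_le_pow_right (by norm_num) (by omega)
    _ = 2 := by norm_num
  have h4 : (2:ℕ)^(m-k+2) = 2^(m-k+1) * 2 := pow_succ 2 (m-k+1)
  have hDle : D.card ≤ 2 ^ (m - k + 2) - 3 := by omega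
  suffices h : ∀ r : ℕ, r ≤ k → ∃ S : Submodule (ZMod 2) (Fin (m + 1) → ZMod 2),
      Module.finrank (ZMod 2) S = r + 1 ∧ x ∈ S ∧ ∀ z ∈ B, z ∈ S → z = x by
    obtain ⟨S, h1, _, h3⟩ := h k le_rfl
    exact ⟨S, h1, h3⟩
  intro r
  induction r with
  | zero =>
    intro _
    refine ⟨Submodule.span (ZMod 2) {x}, finrank_span_singleton hx0,
      Submodule.mem_span_singleton_self x, ?_⟩
    intro z hz hzS
    rcases mem_span_singleton_zmod2.mp hzS with rfl | rfl
    · exact absurd hz h0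
    · rfl
  | succ r ih =>
    intro hr
    obtain ⟨S, hSrank, hxS, hSint⟩ := ih (by omega)
    haveI : Finite ((Fin (m+1) → ZMod 2) ⧸ S) :=
      Finite.of_surjective S.mkQ (Submodule.mkQ_surjective S)
    haveI : Fintype ((Fin (m+1) → ZMod 2) ⧸ S) := Fintype.ofFinite _
    have hfr : Module.finrank (ZMod 2) ((Fin (m+1) → ZMod 2) ⧸ S) = m - r := by
      have h1 := Submodule.finrank_quotient_add_finrank S
      rw [hSrank, Module.finrank_fin_fun] at h1
      omega
    have hcardQ : Fintype.card ((Fin (m+1) → ZMod 2) ⧸ S) = 2 ^ (m - r) := by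
      rw [Module.card_eq_pow_finrank (K := ZMod 2) (V := (Fin (m+1) → ZMod 2) ⧸ S), ZMod.card 2, hfr]
    have hmk0 : ∀ z ∈ D, S.mkQ z ≠ 0 := by
      intro z hz h0'
      have hzS : z ∈ S := by simpa [Submodule.Quotient.mk_eq_zero] using h0'
      rw [hDdef, Finset.mem_erase, Set.Finite.mem_toFinset] at hz
      exact hz.1 (hSint z hz.2 hzS)
    have hgood : ∃ w : (Fin (m+1) → ZMod 2) ⧸ S, w ≠ 0 ∧ ∀ z ∈ D, S.mkQ z ≠ w := by
      by_contra hcon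
      push_neg at hcon
      have hfib := Finset.card_eq_sum_card_fiberwise (f := S.mkQ) (s := D)
        (t := Finset.univ.erase 0)
        (fun z hz => Finset.mem_erase.mpr ⟨hmk0 z hz, Finset.mem_univ _⟩)
      have hcardE : (Finset.univ.erase (0:(Fin (m+1) → ZMod 2) ⧸ S)).card = 2^(m-r) - 1 := by
        rw [Finset.card_erase_of_mem (Finset.mem_univ _), Finset.card_univ, hcardQ]
      rcases Nat.lt_or_ge (r+1) k with hrk | hrk
      · have h1 : ∀ w ∈ Finset.univ.erase (0:(Fin (m+1) → ZMod 2) ⧸ S),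
            1 ≤ (D.filter (fun z => S.mkQ z = w)).card := by
          intro w hw
          obtain ⟨z, hzD, hzw⟩ := hcon w (Finset.mem_erase.mp hw).1
          exact Finset.card_pos.mpr ⟨z, Finset.mem_filter.mpr ⟨hzD, hzw⟩⟩
        have hle2 : (Finset.univ.erase (0:(Fin (m+1) → ZMod 2) ⧸ S)).card ≤ D.card := by
          calc (Finset.univ.erase (0:(Fin (m+1) → ZMod 2) ⧸ S)).card
              = ∑ w ∈ Finset.univ.erase (0:(Fin (m+1) → ZMod 2) ⧸ S), 1 := by simp
            _ ≤ ∑ w ∈ Finset.univ.erase (0:(Fin (m+1) → ZMod 2) ⧸ S),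
                (D.filter (fun z => S.mkQ z = w)).card := Finset.sum_le_sum h1
            _ = D.card := hfib.symm
        rw [hcardE] at hle2
        have hle : (2:ℕ)^(m-k+2) ≤ 2^(m-r) := Nat.pow_le_pow_right (by norm_num) (by omega)
        clear hfib hcardE hcardQ hfr
        generalize hp : (2:ℕ)^(m-k+1) = p at h4 hpow
        generalize hq : (2:ℕ)^(m-k+2) = q at h4 hDle hle
        generalize hs : (2:ℕ)^(m-r) = s at hle hle2
        omega
      · have hrk' : r + 1 = k := le_antisymm hr hrk
        have h2 : ∀ w ∈ Finset.univ.erase (0:(Fin (m+1) → ZMod 2) ⧸ S),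
            2 ≤ (D.filter (fun z => S.mkQ z = w)).card := by
          intro w hw
          have hw0 := (Finset.mem_erase.mp hw).1
          obtain ⟨z, hzD, hzw⟩ := hcon w hw0
          have hne : (D.filter (fun z => S.mkQ z = w)).Nonempty :=
            ⟨z, Finset.mem_filter.mpr ⟨hzD, hzw⟩⟩
          obtain ⟨T, hST, hTrank, hTmem⟩ := ext_lemma S w hw0
          have hTk : Module.finrank (ZMod 2) T = k + 1 := by rw [hTrank, hSrank]; omega
          have hOdd := hodd T hTk
          have hset : {u : Fin (m+1) → ZMod 2 | u ∈ B ∧ u ∈ T}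
              = insert x ↑(D.filter (fun z => S.mkQ z = w)) := by
            ext u
            simp only [Set.mem_setOf_eq, Set.mem_insert_iff, Finset.coe_filter,
              Finset.mem_erase, Set.Finite.mem_toFinset, hDdef]
            constructor
            · rintro ⟨huB, huT⟩
              rcases (hTmem u).mp huT with h | h
              · left; exact hSint u huB (by simpa [Submodule.Quotient.mk_eq_zero] using h)
              · by_cases hux : u = x
                · left; exact hux
                · right; exact ⟨⟨hux, huB⟩, h⟩
            · rintro (rfl | ⟨⟨hux, huB⟩, hmk⟩)
              · exact ⟨hx, hST hxS⟩
              · exact ⟨huB, (hTmem u).mpr (Or.inr hmk)⟩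
          have hxnot : x ∉ (↑(D.filter (fun z => S.mkQ z = w)) : Set _) := by
            intro hxm
            rw [Finset.mem_coe, Finset.mem_filter, hDdef, Finset.mem_erase] at hxm
            exact hxm.1.1 rfl
          have hnc : Nat.card {u : Fin (m+1) → ZMod 2 // u ∈ B ∧ u ∈ T}
              = (D.filter (fun z => S.mkQ z = w)).card + 1 := by
            have e1 : Nat.card {u : Fin (m+1) → ZMod 2 // u ∈ B ∧ u ∈ T}
                = ({u : Fin (m+1) → ZMod 2 | u ∈ B ∧ u ∈ T}).ncard :=
              Nat.card_coe_set_eq _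
            rw [e1, hset, Set.ncard_insert_of_notMem hxnot (Set.toFinite _),
              Set.ncard_coe_finset]
          rw [hnc] at hOdd
          have heven : Even (D.filter (fun z => S.mkQ z = w)).card := by
            rcases Nat.even_or_odd (D.filter (fun z => S.mkQ z = w)).card with h | h
            · exact h
            · exfalso
              rcases h with ⟨c, hc⟩
              rcases hOdd with ⟨c', hc'⟩
              omega
          obtain ⟨c, hc⟩ := heven
          have := Finset.card_pos.mpr hne
          omega
        have hle2 : 2 * (Finset.univ.erase (0:(Fin (m+1) → ZMod 2) ⧸ S)).card ≤ D.card := by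
          calc 2 * (Finset.univ.erase (0:(Fin (m+1) → ZMod 2) ⧸ S)).card
              = ∑ w ∈ Finset.univ.erase (0:(Fin (m+1) → ZMod 2) ⧸ S), 2 := by
                rw [Finset.sum_const, smul_eq_mul, mul_comm]
            _ ≤ ∑ w ∈ Finset.univ.erase (0:(Fin (m+1) → ZMod 2) ⧸ S),
                (D.filter (fun z => S.mkQ z = w)).card := Finset.sum_le_sum h2
            _ = D.card := hfib.symm
        rw [hcardE] at hle2
        have hmr : m - r = m - k + 1 := by omega
        rw [hmr] at hle2
        clear hfib hcardE hcardQ hfr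
        generalize hp : (2:ℕ)^(m-k+1) = p at h4 hpow hle2
        generalize hq : (2:ℕ)^(m-k+2) = q at h4 hDle
        omega
    obtain ⟨w, hw0, hwD⟩ := hgood
    obtain ⟨T, hST, hTrank, hTmem⟩ := ext_lemma S w hw0
    refine ⟨T, by rw [hTrank, hSrank], hST hxS, ?_⟩
    intro z hzB hzT
    rcases (hTmem z).mp hzT with h | h
    · exact hSint z hzB (by simpa [Submodule.Quotient.mk_eq_zero] using h)
    · by_contra hzx
      exact hwD z (by rw [hDdef, Finset.mem_erase, Set.Finite.mem_toFinset]; exact ⟨hzx, hzB⟩) h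

theorem stmt_15 {m k : ℕ} (hk : k ≤ m) (B : Set (Fin (m + 1) → ZMod 2))
    (hB : PGBlocking m k B)
    (hodd : ∀ S : Submodule (ZMod 2) (Fin (m + 1) → ZMod 2),
      Module.finrank (ZMod 2) S = k + 1 →
        Odd (Nat.card {x : Fin (m + 1) → ZMod 2 // x ∈ B ∧ x ∈ S}))
    (hsize : B.ncard ≤ 2 ^ (m - k + 2) - 2) :
    ∀ B' ⊂ B, ¬ PGBlocking m k B' := by
  intro B' hsub hB'
  obtain ⟨x, hxB, hxB'⟩ := Set.exists_of_ssubset hsub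
  obtain ⟨S, hSrank, hSint⟩ := key_lemma hk B hB.1 hodd hsize hxB
  obtain ⟨z, hzB', hzS⟩ := hB'.2 S hSrank
  exact hxB' (by rwa [hSint z (hsub.subset hzB') hzS] at hzB')
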